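/- In the monoid G⁺_{m,n}, every element w lying in the set W_{m,n} of elements containing neither Δ₁ = s·t₁⋯t_m nor Δ₂ = s·u₁⋯u_n as a subword can be written uniquely in the normal form w = w₀(t)·w₀(u)·s·w₁(t)·w₁(u)·s⋯s·w_N(t)·w_N(u), where each w_i(t) is a positive word in t₁,…,t_m and each w_i(u) is a positive word in u₁,…,u_n. -/

import Mathlib

/-- Generators of the monoid G⁺_{m,n}: s, t₁,…,t_m, u₁,…,u_n. -/
inductive GGen (m n : ℕ) : Type
  | s : GGen m n
  | t : Fin m → GGen m n
  | u : Fin n → GGen m n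
deriving DecidableEq

/-- The word s·t₁⋯t_m. -/
def wordT (m n : ℕ) : FreeMonoid (GGen m n) :=
  FreeMonoid.ofList (GGen.s :: List.ofFn (fun i : Fin m => GGen.t i))

/-- The word s·u₁⋯u_n. -/
def wordU (m n : ℕ) : FreeMonoid (GGen m n) :=
  FreeMonoid.ofList (GGen.s :: List.ofFn (fun j : Fin n => GGen.u j))

/-- The defining relations: the cyclic relations [s,t₁,…,t_m] and [s,u₁,…,u_n]
(all cyclic rotations of the corresponding words are equal) and the commutation
relations t_i·u_j = u_j·t_i. -/
inductive GRel (m n : ℕ) : FreeMonoid (GGen m n) → FreeMonoid (GGen m n) → Prop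
  | cycT (j : ℕ) : GRel m n (wordT m n)
      (FreeMonoid.ofList ((FreeMonoid.toList (wordT m n)).rotate j))
  | cycU (j : ℕ) : GRel m n (wordU m n)
      (FreeMonoid.ofList ((FreeMonoid.toList (wordU m n)).rotate j))
  | comm (i : Fin m) (j : Fin n) :
      GRel m n (FreeMonoid.of (GGen.t i) * FreeMonoid.of (GGen.u j))
               (FreeMonoid.of (GGen.u j) * FreeMonoid.of (GGen.t i))

/-- The monoid G⁺_{m,n}. -/
abbrev GMonoid (m n : ℕ) : Type := (conGen (GRel m n)).Quotient

/-- The image of a generator in G⁺_{m,n}. -/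
def gmk {m n : ℕ} (x : GGen m n) : GMonoid m n :=
  (conGen (GRel m n)).mk' (FreeMonoid.of x)

/-- The element Δ = s·t₁⋯t_m·u₁⋯u_n. -/
def gDelta (m n : ℕ) : GMonoid m n :=
  (conGen (GRel m n)).mk' (FreeMonoid.ofList
    (GGen.s :: ((List.ofFn fun i : Fin m => GGen.t i) ++ List.ofFn fun j : Fin n => GGen.u j)))


/-- v is a factor (substring) of w. -/
def IsFactor {X : Type*} (v w : FreeMonoid X) : Prop :=
  ∃ p q : FreeMonoid X, w = p * v * q

/-- The set W_{m,n} of elements of G⁺_{m,n} containing neither Δ₁ = s·t₁⋯t_m nor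
Δ₂ = s·u₁⋯u_n as a subword (of any representing positive word). -/
def Wset (m n : ℕ) : Set (GMonoid m n) :=
  {w | ∀ rep : FreeMonoid (GGen m n), (conGen (GRel m n)).mk' rep = w →
    ¬ IsFactor (wordT m n) rep ∧ ¬ IsFactor (wordU m n) rep}

/-- The embedding of positive words in the t's into G⁺_{m,n}. -/
def embT {m n : ℕ} : FreeMonoid (Fin m) →* GMonoid m n :=
  FreeMonoid.lift fun i => gmk (GGen.t i)

/-- The embedding of positive words in the u's into G⁺_{m,n}. -/
def embU {m n : ℕ} : FreeMonoid (Fin n) →* GMonoid m n :=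
  FreeMonoid.lift fun j => gmk (GGen.u j)

/-- Evaluation of a normal form
w₀(t)·w₀(u)·s·w₁(t)·w₁(u)·s⋯s·w_N(t)·w_N(u), encoded as the list of blocks
(w_i(t), w_i(u)) separated by s. -/
def evalNF {m n : ℕ} : List (FreeMonoid (Fin m) × FreeMonoid (Fin n)) → GMonoid m n
  | [] => 1
  | [(x, y)] => embT x * embU y
  | (x, y) :: rest => embT x * embU y * gmk GGen.s * evalNF rest


section Aux

open FreeMonoid

variable {m n : ℕ}

abbrev Blk (m n : ℕ) := FreeMonoid (Fin m) × FreeMonoid (Fin n)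

def addT (i : Fin m) : List (Blk m n) → List (Blk m n)
  | [] => []
  | (x, y) :: l => (FreeMonoid.of i * x, y) :: l

def addU (j : Fin n) : List (Blk m n) → List (Blk m n)
  | [] => []
  | (x, y) :: l => (x, FreeMonoid.of j * y) :: l

def Phi : List (GGen m n) → List (Blk m n)
  | [] => [(1, 1)]
  | .s :: L => (1, 1) :: Phi L
  | .t i :: L => addT i (Phi L)
  | .u j :: L => addU j (Phi L)

lemma addT_ne_nil {i : Fin m} {l : List (Blk m n)} (h : l ≠ []) : addT i l ≠ [] := by
  rcases l with _ | ⟨⟨x, y⟩, l⟩ <;> simp_all [addT]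

lemma addU_ne_nil {j : Fin n} {l : List (Blk m n)} (h : l ≠ []) : addU j l ≠ [] := by
  rcases l with _ | ⟨⟨x, y⟩, l⟩ <;> simp_all [addU]

lemma Phi_ne_nil : ∀ L : List (GGen m n), Phi L ≠ []
  | [] => by simp [Phi]
  | .s :: L => by simp [Phi]
  | .t i :: L => addT_ne_nil (Phi_ne_nil L)
  | .u j :: L => addU_ne_nil (Phi_ne_nil L)

def glue : List (Blk m n) → List (Blk m n) → List (Blk m n)
  | [], l2 => l2
  | [(x, y)], [] => [(x, y)]
  | [(x, y)], (a, b) :: l2 => (x * a, y * b) :: l2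
  | p :: l1, l2 => p :: glue l1 l2

lemma glue_cons {p q : Blk m n} {l1 l2 : List (Blk m n)} :
    glue (p :: q :: l1) l2 = p :: glue (q :: l1) l2 := by
  rcases p with ⟨x, y⟩; rfl

lemma glue_singleton {x : FreeMonoid (Fin m)} {y : FreeMonoid (Fin n)}
    {a : FreeMonoid (Fin m)} {b : FreeMonoid (Fin n)} {l2 : List (Blk m n)} :
    glue [(x, y)] ((a, b) :: l2) = (x * a, y * b) :: l2 := rfl

lemma glue_cons' {p : Blk m n} {l1 l2 : List (Blk m n)} (h : l1 ≠ []) :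
    glue (p :: l1) l2 = p :: glue l1 l2 := by
  rcases l1 with _ | ⟨q, l1⟩
  · exact absurd rfl h
  · exact glue_cons

lemma addT_glue {i : Fin m} {l1 l2 : List (Blk m n)} (h1 : l1 ≠ []) (h2 : l2 ≠ []) :
    addT i (glue l1 l2) = glue (addT i l1) l2 := by
  rcases l1 with _ | ⟨⟨x, y⟩, l1⟩
  · exact absurd rfl h1
  rcases l1 with _ | ⟨q, l1⟩
  · rcases l2 with _ | ⟨⟨a, b⟩, l2⟩
    · exact absurd rfl h2
    · simp [glue_singleton, addT, mul_assoc]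
  · rw [glue_cons]
    show addT i (_ :: _) = glue (addT i ((x,y) :: q :: l1)) l2
    rw [show addT i ((x,y) :: q :: l1) = (FreeMonoid.of i * x, y) :: q :: l1 from rfl,
      glue_cons]
    rfl

lemma addU_glue {j : Fin n} {l1 l2 : List (Blk m n)} (h1 : l1 ≠ []) (h2 : l2 ≠ []) :
    addU j (glue l1 l2) = glue (addU j l1) l2 := by
  rcases l1 with _ | ⟨⟨x, y⟩, l1⟩
  · exact absurd rfl h1
  rcases l1 with _ | ⟨q, l1⟩
  · rcases l2 with _ | ⟨⟨a, b⟩, l2⟩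
    · exact absurd rfl h2
    · simp [glue_singleton, addU, mul_assoc]
  · rw [glue_cons]
    show addU j (_ :: _) = glue (addU j ((x,y) :: q :: l1)) l2
    rw [show addU j ((x,y) :: q :: l1) = (x, FreeMonoid.of j * y) :: q :: l1 from rfl,
      glue_cons]
    rfl

lemma Phi_append : ∀ L1 L2 : List (GGen m n), Phi (L1 ++ L2) = glue (Phi L1) (Phi L2)
  | [], L2 => by
    rcases h : Phi L2 with _ | ⟨⟨a, b⟩, l⟩
    · exact absurd h (Phi_ne_nil L2)
    · rw [List.nil_append, h]
      show (a, b) :: l = (1 * a, 1 * b) :: l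
      rw [one_mul, one_mul]
  | .s :: L1, L2 => by
    rw [List.cons_append]
    show (1, 1) :: Phi (L1 ++ L2) = glue ((1,1) :: Phi L1) (Phi L2)
    rw [Phi_append L1 L2, glue_cons' (Phi_ne_nil L1)]
  | .t i :: L1, L2 => by
    rw [List.cons_append]
    show addT i (Phi (L1 ++ L2)) = glue (addT i (Phi L1)) (Phi L2)
    rw [Phi_append L1 L2, addT_glue (Phi_ne_nil L1) (Phi_ne_nil L2)]
  | .u j :: L1, L2 => by
    rw [List.cons_append]
    show addU j (Phi (L1 ++ L2)) = glue (addU j (Phi L1)) (Phi L2)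
    rw [Phi_append L1 L2, addU_glue (Phi_ne_nil L1) (Phi_ne_nil L2)]

def PhiF (a : FreeMonoid (GGen m n)) : List (Blk m n) := Phi (FreeMonoid.toList a)

lemma PhiF_mul (a b : FreeMonoid (GGen m n)) : PhiF (a * b) = glue (PhiF a) (PhiF b) := by
  unfold PhiF
  rw [FreeMonoid.toList_mul, Phi_append]

/-- factor of left part -/
lemma IsFactor.mul_right {X : Type*} {v w y : FreeMonoid X} (h : IsFactor v w) :
    IsFactor v (w * y) := by
  obtain ⟨p, q, rfl⟩ := h
  exact ⟨p, q * y, by simp [mul_assoc]⟩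

lemma IsFactor.mul_left {X : Type*} {v w y : FreeMonoid X} (h : IsFactor v w) :
    IsFactor v (y * w) := by
  obtain ⟨p, q, rfl⟩ := h
  exact ⟨y * p, q, by simp [mul_assoc]⟩

def Good (m n : ℕ) (a : FreeMonoid (GGen m n)) : Prop :=
  ∀ v, ConGen.Rel (GRel m n) a v →
    ¬ IsFactor (wordT m n) v ∧ ¬ IsFactor (wordU m n) v

lemma Good.of_rel {a b : FreeMonoid (GGen m n)} (hg : Good m n a)
    (h : ConGen.Rel (GRel m n) a b) : Good m n b :=
  fun v hv => hg v (h.trans hv)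

lemma Good.mul_left {a b : FreeMonoid (GGen m n)} (hg : Good m n (a * b)) : Good m n a := by
  intro v hv
  have h2 := hg (v * b) (ConGen.Rel.mul hv (ConGen.Rel.refl b))
  exact ⟨fun h => h2.1 h.mul_right, fun h => h2.2 h.mul_right⟩

lemma Good.mul_right {a b : FreeMonoid (GGen m n)} (hg : Good m n (a * b)) : Good m n b := by
  intro v hv
  have h2 := hg (a * v) (ConGen.Rel.mul (ConGen.Rel.refl a) hv)
  exact ⟨fun h => h2.1 h.mul_left, fun h => h2.2 h.mul_left⟩

lemma phi_eq_of_rel {a b : FreeMonoid (GGen m n)} (h : ConGen.Rel (GRel m n) a b) :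
    Good m n a → PhiF a = PhiF b := by
  induction h with
  | of x y hxy =>
    intro hg
    cases hxy with
    | cycT j =>
      exact absurd ⟨1, 1, by rw [one_mul, mul_one]⟩ (hg _ (ConGen.Rel.refl _)).1
    | cycU j =>
      exact absurd ⟨1, 1, by rw [one_mul, mul_one]⟩ (hg _ (ConGen.Rel.refl _)).2
    | comm i j => rfl
  | refl x => intro _; rfl
  | symm h ih => intro hg; exact (ih (hg.of_rel (ConGen.Rel.symm h))).symm
  | trans h1 h2 ih1 ih2 => intro hg; exact (ih1 hg).trans (ih2 (hg.of_rel h1))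
  | mul h1 h2 ih1 ih2 =>
    intro hg
    rw [PhiF_mul, PhiF_mul, ih1 hg.mul_left, ih2 hg.mul_right]

lemma gmk_comm (i : Fin m) (j : Fin n) :
    gmk (GGen.u j) * gmk (GGen.t i) = gmk (GGen.t i) * gmk (GGen.u j) := by
  have : (conGen (GRel m n)).mk' (FreeMonoid.of (GGen.t i) * FreeMonoid.of (GGen.u j))
      = (conGen (GRel m n)).mk' (FreeMonoid.of (GGen.u j) * FreeMonoid.of (GGen.t i)) :=
    (Con.eq _).mpr (ConGen.Rel.of _ _ (GRel.comm i j))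
  simpa [gmk, map_mul] using this.symm

lemma gmk_u_comm_embT (j : Fin n) : ∀ x : FreeMonoid (Fin m),
    gmk (GGen.u j) * embT x = embT x * gmk (GGen.u j) := by
  intro x
  induction x using FreeMonoid.recOn with
  | one => simp
  | of_mul i xs ih =>
    rw [map_mul]
    show gmk (GGen.u j) * (gmk (GGen.t i) * embT xs) = gmk (GGen.t i) * embT xs * gmk (GGen.u j)
    rw [← mul_assoc, gmk_comm, mul_assoc, ih, mul_assoc]

lemma evalNF_cons_cons (x : FreeMonoid (Fin m)) (y : FreeMonoid (Fin n)) (p : Blk m n)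
    (l : List (Blk m n)) :
    evalNF ((x, y) :: p :: l) = embT x * embU y * gmk GGen.s * evalNF (p :: l) := rfl

lemma evalNF_addT (i : Fin m) (x : FreeMonoid (Fin m)) (y : FreeMonoid (Fin n))
    (l : List (Blk m n)) :
    evalNF ((FreeMonoid.of i * x, y) :: l) = gmk (GGen.t i) * evalNF ((x, y) :: l) := by
  rcases l with _ | ⟨p, l⟩
  · show embT (FreeMonoid.of i * x) * embU y = gmk (GGen.t i) * (embT x * embU y)
    rw [map_mul, show embT (FreeMonoid.of i) = gmk (GGen.t i) from rfl, mul_assoc]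
  · rw [evalNF_cons_cons, evalNF_cons_cons, map_mul,
      show embT (FreeMonoid.of i) = gmk (GGen.t i) from rfl]
    simp [mul_assoc]

lemma evalNF_addU (j : Fin n) (x : FreeMonoid (Fin m)) (y : FreeMonoid (Fin n))
    (l : List (Blk m n)) :
    evalNF ((x, FreeMonoid.of j * y) :: l) = gmk (GGen.u j) * evalNF ((x, y) :: l) := by
  have key : embT x * embU (FreeMonoid.of j * y) = gmk (GGen.u j) * (embT x * embU y) := by
    rw [map_mul, show embU (FreeMonoid.of j) = gmk (GGen.u j) from rfl, ← mul_assoc,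
      ← gmk_u_comm_embT, mul_assoc]
  rcases l with _ | ⟨p, l⟩
  · exact key
  · rw [evalNF_cons_cons, evalNF_cons_cons, key]
    simp [mul_assoc]

lemma evalNF_Phi : ∀ L : List (GGen m n),
    evalNF (Phi L) = (conGen (GRel m n)).mk' (FreeMonoid.ofList L)
  | [] => by
    show embT 1 * embU 1 = _
    simp [FreeMonoid.ofList]
    rfl
  | .s :: L => by
    rcases h : Phi L with _ | ⟨p, l⟩
    · exact absurd h (Phi_ne_nil L)
    · rw [show Phi (GGen.s :: L) = (1, 1) :: Phi L from rfl, h,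
        evalNF_cons_cons, ← h, evalNF_Phi L, FreeMonoid.ofList_cons, map_mul]
      simp [gmk]
  | .t i :: L => by
    rcases h : Phi L with _ | ⟨⟨x, y⟩, l⟩
    · exact absurd h (Phi_ne_nil L)
    · rw [show Phi (GGen.t i :: L) = addT i (Phi L) from rfl, h,
        show addT i ((x,y) :: l) = (FreeMonoid.of i * x, y) :: l from rfl,
        evalNF_addT, ← h, evalNF_Phi L, FreeMonoid.ofList_cons, map_mul]
      rfl
  | .u j :: L => by
    rcases h : Phi L with _ | ⟨⟨x, y⟩, l⟩
    · exact absurd h (Phi_ne_nil L)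
    · rw [show Phi (GGen.u j :: L) = addU j (Phi L) from rfl, h,
        show addU j ((x,y) :: l) = (x, FreeMonoid.of j * y) :: l from rfl,
        evalNF_addU, ← h, evalNF_Phi L, FreeMonoid.ofList_cons, map_mul]
      rfl

def flat : List (Blk m n) → List (GGen m n)
  | [] => []
  | [(x, y)] => (FreeMonoid.toList x).map GGen.t ++ (FreeMonoid.toList y).map GGen.u
  | (x, y) :: l => (FreeMonoid.toList x).map GGen.t ++
      ((FreeMonoid.toList y).map GGen.u ++ GGen.s :: flat l)

lemma mk_map_t : ∀ x : FreeMonoid (Fin m),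
    (conGen (GRel m n)).mk' (FreeMonoid.ofList ((FreeMonoid.toList x).map GGen.t))
      = (embT x : GMonoid m n) := by
  intro x
  induction x using FreeMonoid.recOn with
  | one => rfl
  | of_mul i xs ih =>
    have h1 : FreeMonoid.toList (FreeMonoid.of i * xs) = i :: FreeMonoid.toList xs := rfl
    rw [h1, List.map_cons, FreeMonoid.ofList_cons, map_mul, ih, map_mul]
    rfl

lemma mk_map_u : ∀ y : FreeMonoid (Fin n),
    (conGen (GRel m n)).mk' (FreeMonoid.ofList ((FreeMonoid.toList y).map GGen.u))
      = (embU y : GMonoid m n) := by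
  intro y
  induction y using FreeMonoid.recOn with
  | one => rfl
  | of_mul j ys ih =>
    have h1 : FreeMonoid.toList (FreeMonoid.of j * ys) = j :: FreeMonoid.toList ys := rfl
    rw [h1, List.map_cons, FreeMonoid.ofList_cons, map_mul, ih, map_mul]
    rfl

lemma evalNF_flat : ∀ l : List (Blk m n),
    evalNF l = (conGen (GRel m n)).mk' (FreeMonoid.ofList (flat l))
  | [] => by simp [flat, evalNF]
  | [(x, y)] => by
    show embT x * embU y = _
    rw [show flat [(x,y)] = (FreeMonoid.toList x).map GGen.t ++ (FreeMonoid.toList y).map GGen.u from rfl,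
      FreeMonoid.ofList_append, map_mul, mk_map_t, mk_map_u]
  | (x, y) :: p :: l => by
    rw [evalNF_cons_cons, evalNF_flat (p :: l),
      show flat ((x,y) :: p :: l) = (FreeMonoid.toList x).map GGen.t ++
        ((FreeMonoid.toList y).map GGen.u ++ GGen.s :: flat (p :: l)) from rfl,
      FreeMonoid.ofList_append, FreeMonoid.ofList_append, FreeMonoid.ofList_cons,
      map_mul, map_mul, map_mul, mk_map_t, mk_map_u]
    show _ = embT x * (embU y * (gmk GGen.s * _))
    simp [mul_assoc]

lemma Phi_map_t : ∀ (x : List (Fin m)) (L : List (GGen m n)) (a : FreeMonoid (Fin m))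
    (b : FreeMonoid (Fin n)) (l : List (Blk m n)), Phi L = (a, b) :: l →
    Phi (x.map GGen.t ++ L) = (FreeMonoid.ofList x * a, b) :: l
  | [], L, a, b, l, h => by simpa using h
  | i :: x, L, a, b, l, h => by
    rw [List.map_cons, List.cons_append]
    show addT i (Phi (x.map GGen.t ++ L)) = _
    rw [Phi_map_t x L a b l h]
    show (FreeMonoid.of i * (FreeMonoid.ofList x * a), b) :: l = _
    rw [← mul_assoc, ← FreeMonoid.ofList_cons]

lemma Phi_map_u : ∀ (y : List (Fin n)) (L : List (GGen m n)) (a : FreeMonoid (Fin m))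
    (b : FreeMonoid (Fin n)) (l : List (Blk m n)), Phi L = (a, b) :: l →
    Phi (y.map GGen.u ++ L) = (a, FreeMonoid.ofList y * b) :: l
  | [], L, a, b, l, h => by simpa using h
  | j :: y, L, a, b, l, h => by
    rw [List.map_cons, List.cons_append]
    show addU j (Phi (y.map GGen.u ++ L)) = _
    rw [Phi_map_u y L a b l h]
    show (a, FreeMonoid.of j * (FreeMonoid.ofList y * b)) :: l = _
    rw [← mul_assoc, ← FreeMonoid.ofList_cons]

lemma Phi_flat : ∀ l : List (Blk m n), l ≠ [] → Phi (flat l) = l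
  | [], h => absurd rfl h
  | [(x, y)], _ => by
    have h0 : Phi ([] : List (GGen m n)) = (1, 1) :: [] := rfl
    have h1 := Phi_map_u (FreeMonoid.toList y) [] 1 1 [] h0
    rw [List.append_nil] at h1
    have h2 := Phi_map_t (FreeMonoid.toList x) _ _ _ _ h1
    rw [show flat [(x,y)] = (FreeMonoid.toList x).map GGen.t ++ (FreeMonoid.toList y).map GGen.u from rfl,
      h2, mul_one, mul_one, FreeMonoid.ofList_toList, FreeMonoid.ofList_toList]
  | (x, y) :: p :: l, _ => by
    have hrec := Phi_flat (p :: l) (by simp)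
    have h0 : Phi (GGen.s :: flat (p :: l)) = (1, 1) :: p :: l := by
      show (1, 1) :: Phi (flat (p :: l)) = _
      rw [hrec]
    have h1 := Phi_map_u (FreeMonoid.toList y) _ _ _ _ h0
    have h2 := Phi_map_t (FreeMonoid.toList x) _ _ _ _ h1
    rw [show flat ((x,y) :: p :: l) = (FreeMonoid.toList x).map GGen.t ++
        ((FreeMonoid.toList y).map GGen.u ++ GGen.s :: flat (p :: l)) from rfl,
      h2, mul_one, mul_one, FreeMonoid.ofList_toList, FreeMonoid.ofList_toList]

end Aux

/-- Every element of W_{m,n} has a unique normal form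
w₀(t)·w₀(u)·s·w₁(t)·w₁(u)·s⋯s·w_N(t)·w_N(u) with each w_i(t) a positive word in the
t's and each w_i(u) a positive word in the u's. -/
theorem stmt_19 (m n : ℕ) (hm : 2 ≤ m) (hn : 2 ≤ n) (w : GMonoid m n)
    (hw : w ∈ Wset m n) :
    ∃! l : List (FreeMonoid (Fin m) × FreeMonoid (Fin n)), l ≠ [] ∧ evalNF l = w := by
  obtain ⟨rep, rfl⟩ := Con.mk'_surjective w
  have hgood : Good m n rep := by
    intro v hv
    exact hw v ((Con.eq _).mpr (ConGen.Rel.symm hv : ConGen.Rel (GRel m n) v rep))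
  refine ⟨PhiF rep, ⟨Phi_ne_nil _, ?_⟩, ?_⟩
  · rw [show PhiF rep = Phi (FreeMonoid.toList rep) from rfl, evalNF_Phi,
      FreeMonoid.ofList_toList]
  · rintro l ⟨hl, hev⟩
    have h1 : (conGen (GRel m n)).mk' (FreeMonoid.ofList (flat l))
        = (conGen (GRel m n)).mk' rep := by rw [← evalNF_flat, hev]
    have h2 : ConGen.Rel (GRel m n) rep (FreeMonoid.ofList (flat l)) :=
      ((Con.eq _).mp h1.symm : (conGen (GRel m n)) rep _)
    have h3 := phi_eq_of_rel h2 hgood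
    rw [show PhiF (FreeMonoid.ofList (flat l)) = Phi (flat l) from rfl, Phi_flat l hl] at h3
    exact h3.symm
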